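/- For positive integers n, the number of equivalence classes in T(n,2)/∼, i.e., the number of permutation-equivalence classes of n×n non-negative integer matrices with all row and column sums 2 that are permutation equivalent to their transpose, equals the number of partitions of n. -/

import Mathlib

open Matrix

/-- `A` and `B` are permutation equivalent. -/
def permEquiv {n : ℕ} (A B : Matrix (Fin n) (Fin n) ℕ) : Prop :=
  ∃ σ τ : Equiv.Perm (Fin n), ∀ i j, B i j = A (σ i) (τ j)

namespace Stmt16Aux

variable {n : ℕ}

/-- canonical matrix attached to a permutation: identity plus permutation matrix -/
def pm (σ : Equiv.Perm (Fin n)) : Matrix (Fin n) (Fin n) ℕ :=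
  fun i j => (if i = j then 1 else 0) + (if σ i = j then 1 else 0)

lemma permEquiv_refl (A : Matrix (Fin n) (Fin n) ℕ) : permEquiv A A :=
  ⟨1, 1, fun _ _ => rfl⟩

lemma permEquiv_symm {A B : Matrix (Fin n) (Fin n) ℕ} (h : permEquiv A B) : permEquiv B A := by
  obtain ⟨σ, τ, h⟩ := h
  exact ⟨σ⁻¹, τ⁻¹, fun i j => by rw [h (σ⁻¹ i) (τ⁻¹ j)]; simp⟩

lemma permEquiv_trans {A B C : Matrix (Fin n) (Fin n) ℕ} (h1 : permEquiv A B)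
    (h2 : permEquiv B C) : permEquiv A C := by
  obtain ⟨σ, τ, h1⟩ := h1
  obtain ⟨σ', τ', h2⟩ := h2
  exact ⟨σ * σ', τ * τ', fun i j => by rw [h2, h1]; rfl⟩

lemma indicator_perm_sum (σ : Equiv.Perm (Fin n)) (j : Fin n) :
    ∑ i, (if σ i = j then 1 else 0 : ℕ) = 1 := by
  have h : ∀ i, (if σ i = j then 1 else 0 : ℕ) = if i = σ⁻¹ j then 1 else 0 :=
    fun i => if_congr (Equiv.Perm.eq_inv_iff_eq).symm rfl rfl
  simp only [h]
  simp

lemma pm_rowSum (σ : Equiv.Perm (Fin n)) (i : Fin n) : ∑ j, pm σ i j = 2 := by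
  simp [pm, Finset.sum_add_distrib, Finset.sum_ite_eq]

lemma pm_colSum (σ : Equiv.Perm (Fin n)) (j : Fin n) : ∑ i, pm σ i j = 2 := by
  have h2 : ∑ i, (if i = j then 1 else 0 : ℕ) = 1 := by simp
  show ∑ i, ((if i = j then 1 else 0) + (if σ i = j then 1 else 0) : ℕ) = 2
  rw [Finset.sum_add_distrib, h2, indicator_perm_sum]

lemma pm_transpose (σ : Equiv.Perm (Fin n)) : (pm σ)ᵀ = pm σ⁻¹ := by
  ext i j
  simp only [transpose_apply, pm]
  congr 1
  · exact if_congr eq_comm rfl rfl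
  · exact if_congr (by rw [Equiv.Perm.inv_eq_iff_eq, eq_comm]) rfl rfl

lemma permEquiv_of_isConj {σ τ : Equiv.Perm (Fin n)} (h : IsConj σ τ) :
    permEquiv (pm σ) (pm τ) := by
  obtain ⟨ρ, hρ⟩ := isConj_iff.mp h
  refine ⟨ρ⁻¹, ρ⁻¹, fun i j => ?_⟩
  subst hρ
  simp only [pm]
  congr 1
  · exact if_congr (by constructor <;> (intro h'; exact ρ⁻¹.injective (by simpa using h')) ) rfl rfl
  · refine if_congr ?_ rfl rfl
    simp only [Equiv.Perm.mul_apply]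
    constructor
    · intro h'
      rw [← h']
      simp
    · intro h'
      have := congrArg ρ h'
      simpa using this

lemma sum_eq_one {v : Fin n → ℕ} (h : ∑ j, v j = 1) :
    ∃ j0, ∀ j, v j = if j0 = j then 1 else 0 := by
  have hex : ∃ j0, v j0 ≠ 0 := by
    by_contra hc
    push_neg at hc
    simp [hc] at h
  obtain ⟨j0, hj0⟩ := hex
  refine ⟨j0, fun j => ?_⟩
  have hsplit := Finset.add_sum_erase Finset.univ v (Finset.mem_univ j0)
  rw [h] at hsplit
  have hv0 : v j0 = 1 := by omega
  by_cases hj : j0 = j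
  · simp [← hj, hv0]
  · have hz0 : ∑ k ∈ Finset.univ.erase j0, v k = 0 := by omega
    have hz := Finset.sum_eq_zero_iff.mp hz0 j (by simp [Ne.symm hj])
    simp [hj, hz]

/-- Every matrix with row and column sums 2 is equivalent to a canonical one. -/
lemma exists_pm {A : Matrix (Fin n) (Fin n) ℕ} (h1 : ∀ i, ∑ j, A i j = 2)
    (h2 : ∀ j, ∑ i, A i j = 2) : ∃ σ, permEquiv A (pm σ) := by
  classical
  -- Hall's theorem to find a system of distinct representatives
  set t : Fin n → Finset (Fin n) := fun i => Finset.univ.filter (fun j => A i j ≠ 0) with ht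
  have hall : ∀ s : Finset (Fin n), s.card ≤ (s.biUnion t).card := by
    intro s
    have key : 2 * s.card ≤ 2 * (s.biUnion t).card := by
      calc 2 * s.card = ∑ i ∈ s, ∑ j, A i j := by
            simp [h1, mul_comm, Finset.sum_const]
        _ = ∑ i ∈ s, ∑ j ∈ s.biUnion t, A i j := by
            refine Finset.sum_congr rfl fun i hi => ?_
            refine (Finset.sum_subset (fun j _ => Finset.mem_univ j) ?_).symm
            intro j _ hj
            by_contra hc
            exact hj (Finset.mem_biUnion.mpr ⟨i, hi, by simp [ht, hc]⟩)
        _ = ∑ j ∈ s.biUnion t, ∑ i ∈ s, A i j := Finset.sum_comm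
        _ ≤ ∑ j ∈ s.biUnion t, ∑ i, A i j := by
            refine Finset.sum_le_sum fun j _ => ?_
            exact Finset.sum_le_sum_of_subset (Finset.subset_univ s)
        _ = 2 * (s.biUnion t).card := by simp [h2, mul_comm, Finset.sum_const]
    omega
  obtain ⟨f, hfinj, hf⟩ := (Finset.all_card_le_biUnion_card_iff_exists_injective t).mp hall
  have hfpos : ∀ i, A i (f i) ≠ 0 := fun i => by
    have := hf i; simp [ht] at this; exact this
  let α : Equiv.Perm (Fin n) := Equiv.ofBijective f (Finite.injective_iff_bijective.mp hfinj)
  have hα : ∀ i, (α i : Fin n) = f i := fun _ => rfl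
  -- subtract the permutation matrix of α
  set B : Matrix (Fin n) (Fin n) ℕ := fun i j => A i j - (if α i = j then 1 else 0) with hB
  have hAB : ∀ i j, A i j = B i j + (if α i = j then 1 else 0) := by
    intro i j
    by_cases hc : α i = j
    · subst hc
      have hz : A i (α i) ≠ 0 := by rw [hα]; exact hfpos i
      show A i (α i) = A i (α i) - (if α i = α i then 1 else 0) + (if α i = α i then 1 else 0)
      rw [if_pos rfl]
      omega
    · show A i j = A i j - (if α i = j then 1 else 0) + (if α i = j then 1 else 0)
      rw [if_neg hc]
      omega
  have hBrow : ∀ i, ∑ j, B i j = 1 := by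
    intro i
    have h1' := h1 i
    have hsum : ∑ j, A i j = (∑ j, B i j) + ∑ j, (if α i = j then 1 else 0 : ℕ) := by
      rw [← Finset.sum_add_distrib]; exact Finset.sum_congr rfl fun j _ => hAB i j
    have h1'' : ∑ j, (if α i = j then 1 else 0 : ℕ) = 1 := by simp
    omega
  have hBcol : ∀ j, ∑ i, B i j = 1 := by
    intro j
    have h2' := h2 j
    have hsum : ∑ i, A i j = (∑ i, B i j) + ∑ i, (if α i = j then 1 else 0 : ℕ) := by
      rw [← Finset.sum_add_distrib]; exact Finset.sum_congr rfl fun i _ => hAB i j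
    have h1'' := indicator_perm_sum α j
    omega
  -- each row of B is a standard basis vector
  choose g hg using fun i => sum_eq_one (hBrow i)
  have hginj : Function.Injective g := by
    intro i1 i2 hi
    by_contra hne
    have hcol := hBcol (g i1)
    have hpair : ∑ i ∈ ({i1, i2} : Finset (Fin n)), B i (g i1) = 2 := by
      rw [Finset.sum_pair hne]
      have e1 : B i1 (g i1) = 1 := by rw [hg i1 (g i1)]; simp
      have e2 : B i2 (g i1) = 1 := by rw [hg i2 (g i1)]; simp [hi]
      omega
    have hle : ∑ i ∈ ({i1, i2} : Finset (Fin n)), B i (g i1) ≤ ∑ i, B i (g i1) :=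
      Finset.sum_le_sum_of_subset (Finset.subset_univ _)
    omega
  let β : Equiv.Perm (Fin n) := Equiv.ofBijective g (Finite.injective_iff_bijective.mp hginj)
  have hβ : ∀ i, (β i : Fin n) = g i := fun _ => rfl
  refine ⟨β * α⁻¹, α⁻¹, 1, fun i j => ?_⟩
  have hA : A (α⁻¹ i) j
      = (if α (α⁻¹ i) = j then 1 else 0) + (if β (α⁻¹ i) = j then 1 else 0) := by
    rw [hAB (α⁻¹ i) j, hβ, ← hg (α⁻¹ i) j]
    ring
  simp only [pm, Equiv.Perm.one_apply, Equiv.Perm.mul_apply, hA]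
  simp
  congr

/-- piecewise decomposition: a permutation is the product of its restriction to an
invariant set and its restriction to the complement. -/
lemma perm_decomp (π : Equiv.Perm (Fin n)) (p : Fin n → Prop) [DecidablePred p]
    (hp : ∀ x, p x ↔ p (π x)) :
    π = Equiv.Perm.ofSubtype (π.subtypePerm (fun x => (hp x).symm)) *
        Equiv.Perm.ofSubtype (π.subtypePerm (fun x => (not_congr (hp x)).symm) :
          Equiv.Perm {x // ¬ p x}) := by
  ext x
  by_cases hx : p x
  · rw [Equiv.Perm.mul_apply]
    have h2 : Equiv.Perm.ofSubtype
        (π.subtypePerm (fun x => (not_congr (hp x)).symm) : Equiv.Perm {x // ¬ p x}) x = x :=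
      Equiv.Perm.ofSubtype_apply_of_not_mem _ (not_not_intro hx)
    rw [h2, Equiv.Perm.ofSubtype_apply_of_mem _ hx, Equiv.Perm.subtypePerm_apply]
  · rw [Equiv.Perm.mul_apply,
      Equiv.Perm.ofSubtype_apply_of_mem (p := fun x => ¬ p x) _ hx,
      Equiv.Perm.subtypePerm_apply]
    have hnpx : ¬ p (π x) := fun hcon => hx ((hp x).mpr hcon)
    rw [Equiv.Perm.ofSubtype_apply_of_not_mem _ hnpx]

lemma disjoint_decomp (π ρ : Equiv.Perm (Fin n)) (p : Fin n → Prop) [DecidablePred p]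
    (hp : ∀ x, p x ↔ p (π x)) (hρ : ∀ x, ¬ p x ↔ ¬ p (ρ x)) :
    Equiv.Perm.Disjoint (Equiv.Perm.ofSubtype (π.subtypePerm (fun x => (hp x).symm)))
      (Equiv.Perm.ofSubtype (ρ.subtypePerm (fun x => (hρ x).symm) : Equiv.Perm {x // ¬ p x})) := by
  intro x
  by_cases hx : p x
  · right; exact Equiv.Perm.ofSubtype_apply_of_not_mem _ (not_not_intro hx)
  · left; exact Equiv.Perm.ofSubtype_apply_of_not_mem _ hx

/-- main injectivity lemma: equivalent canonical matrices come from permutations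
with the same cycle type. -/
lemma cycleType_eq_of_permEquiv {σ τ : Equiv.Perm (Fin n)}
    (h : permEquiv (pm σ) (pm τ)) : σ.cycleType = τ.cycleType := by
  classical
  obtain ⟨ρ, π, h⟩ := h
  set a : Equiv.Perm (Fin n) := π⁻¹ * ρ with ha
  set b : Equiv.Perm (Fin n) := π⁻¹ * σ * ρ with hb
  have hab : ∀ i j, ((if i = j then 1 else 0) + (if τ i = j then 1 else 0) : ℕ)
      = (if a i = j then 1 else 0) + (if b i = j then 1 else 0) := by
    intro i j
    have hthis := h i j
    simp only [pm] at hthis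
    rw [hthis]
    congr 1
    · refine (if_congr ?_ rfl rfl)
      rw [ha]
      simp only [Equiv.Perm.mul_apply]
      rw [Equiv.Perm.inv_eq_iff_eq]
    · refine (if_congr ?_ rfl rfl)
      rw [hb]
      simp only [Equiv.Perm.mul_apply]
      rw [Equiv.Perm.inv_eq_iff_eq]
  have hcase : ∀ i, (a i = i ∧ b i = τ i) ∨ (a i = τ i ∧ b i = i) := by
    intro i
    by_cases hai : a i = i
    · left
      refine ⟨hai, ?_⟩
      have h' := hab i (b i)
      rw [hai] at h'
      by_cases hq : τ i = b i
      · exact hq.symm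
      · exfalso
        rw [if_neg hq, if_pos rfl] at h'
        by_cases hib : i = b i
        · rw [if_pos hib] at h'; omega
        · rw [if_neg hib] at h'; omega
    · right
      have h1 := hab i (a i)
      rw [if_pos rfl] at h1
      have hne : ¬ i = a i := fun hcon => hai hcon.symm
      rw [if_neg hne] at h1
      have hta : τ i = a i := by
        by_contra hcon
        rw [if_neg hcon] at h1
        by_cases hba : b i = a i
        · rw [if_pos hba] at h1; omega
        · rw [if_neg hba] at h1; omega
      refine ⟨hta.symm, ?_⟩
      have h2 := hab i (b i)
      rw [if_pos rfl] at h2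
      rw [show a i = τ i from hta.symm] at h2
      by_cases hbi : i = b i
      · exact hbi.symm
      · exfalso
        rw [if_neg hbi] at h2
        by_cases htb : τ i = b i
        · rw [if_pos htb] at h2; omega
        · rw [if_neg htb] at h2; omega
  -- the set where a is the identity
  set p : Fin n → Prop := fun x => a x = x with hpdef
  have hpτ : ∀ x, p x → p (τ x) := by
    intro x hx
    rcases hcase x with ⟨hax, hbx⟩ | ⟨hax, hbx⟩
    · rcases hcase (τ x) with ⟨h1, _⟩ | ⟨_, h2⟩
      · exact h1
      · have hxx : x = τ x := b.injective (by rw [hbx, h2])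
        show a (τ x) = τ x
        rw [← hxx]; exact hx
    · have hτx : τ x = x := hax.symm.trans hx
      show a (τ x) = τ x
      rw [hτx]; exact hx
  have hpiff : ∀ x, p x ↔ p (τ x) := by
    intro x
    refine ⟨hpτ x, fun hx => ?_⟩
    by_contra hcon
    set S : Finset (Fin n) := Finset.univ.filter p with hS
    have hmap : ∀ y ∈ S, τ y ∈ S := by
      intro y hy
      have hpy : p y := (Finset.mem_filter.mp hy).2
      exact Finset.mem_filter.mpr ⟨Finset.mem_univ _, hpτ y hpy⟩
    have himg : Finset.image τ S = S := by
      apply Finset.eq_of_subset_of_card_le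
      · intro y hy
        obtain ⟨z, hz, rfl⟩ := Finset.mem_image.mp hy
        exact hmap z hz
      · rw [Finset.card_image_of_injective _ τ.injective]
    have hτx : τ x ∈ S := Finset.mem_filter.mpr ⟨Finset.mem_univ _, hx⟩
    rw [← himg] at hτx
    obtain ⟨z, hz, hzx⟩ := Finset.mem_image.mp hτx
    have hzx' : z = x := τ.injective hzx
    subst hzx'
    exact hcon (Finset.mem_filter.mp hz).2
  have hpiff' : ∀ x, ¬ p x ↔ ¬ p (τ x) := fun x => not_congr (hpiff x)
  set c : Equiv.Perm (Fin n) := b * a⁻¹ with hcdef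
  have hcT : ∀ x, p x → c x = τ x := by
    intro x hx
    have hax : a x = x := hx
    have hinv : a⁻¹ x = x := by
      apply a.injective
      rw [Equiv.Perm.coe_inv, Equiv.apply_symm_apply, hax]
    rcases hcase x with ⟨_, hbx⟩ | ⟨hax', hbx⟩
    · show b (a⁻¹ x) = τ x
      rw [hinv, hbx]
    · have hτ : τ x = x := hax'.symm.trans hax
      show b (a⁻¹ x) = τ x
      rw [hinv, hbx, hτ]
  have hcT' : ∀ x, ¬ p x → c x = τ⁻¹ x := by
    intro x hx
    have hnx : ¬ p (τ⁻¹ x) := by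
      intro hcon
      have := hpτ _ hcon
      rw [Equiv.Perm.coe_inv, Equiv.apply_symm_apply] at this
      exact hx this
    rcases hcase (τ⁻¹ x) with ⟨h1, _⟩ | ⟨h1, h2⟩
    · exact absurd h1 hnx
    · have h1' : a (τ⁻¹ x) = x := by rw [h1, Equiv.Perm.coe_inv, Equiv.apply_symm_apply]
      have hinv : a⁻¹ x = τ⁻¹ x := by
        apply a.injective
        rw [Equiv.Perm.coe_inv, Equiv.apply_symm_apply, h1']
      show b (a⁻¹ x) = τ⁻¹ x
      rw [hinv, h2]
  have hpiffc : ∀ x, p x ↔ p (c x) := by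
    intro x
    by_cases hx : p x
    · exact ⟨fun _ => by rw [hcT x hx]; exact hpτ x hx, fun _ => hx⟩
    · refine ⟨fun hpx => absurd hpx hx, fun hpcx => ?_⟩
      exfalso
      rw [hcT' x hx] at hpcx
      have hh := hpτ _ hpcx
      rw [Equiv.Perm.coe_inv, Equiv.apply_symm_apply] at hh
      exact hx hh
  have hpiffc' : ∀ x, ¬ p x ↔ ¬ p (c x) := fun x => not_congr (hpiffc x)
  -- decompose τ and c
  have hdecτ := perm_decomp τ p hpiff
  have hdecc := perm_decomp c p hpiffc
  have hdisτ := disjoint_decomp τ τ p hpiff hpiff'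
  have hdisc := disjoint_decomp c c p hpiffc hpiffc'
  have heq1 : (c.subtypePerm (fun x => (hpiffc x).symm) : Equiv.Perm {x // p x}) = τ.subtypePerm (fun x => (hpiff x).symm) :=
    Equiv.ext fun x => Subtype.ext (hcT x.1 x.2)
  have heq2 : (c.subtypePerm (fun x => (hpiffc' x).symm) : Equiv.Perm {x // ¬ p x})
      = (τ.subtypePerm (fun x => (hpiff' x).symm))⁻¹ := by
    rw [Equiv.Perm.inv_subtypePerm]
    exact Equiv.ext fun x => Subtype.ext (hcT' x.1 x.2)
  have hcσ : c.cycleType = σ.cycleType := by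
    have hcc : c = π⁻¹ * σ * (π⁻¹)⁻¹ := by rw [hcdef, hb, ha]; group
    rw [hcc, Equiv.Perm.cycleType_conj]
  calc σ.cycleType = c.cycleType := hcσ.symm
    _ = (Equiv.Perm.ofSubtype (c.subtypePerm (fun x => (hpiffc x).symm))).cycleType
        + (Equiv.Perm.ofSubtype (c.subtypePerm (fun x => (hpiffc' x).symm))).cycleType := by
        conv_lhs => rw [hdecc]
        exact Equiv.Perm.Disjoint.cycleType_mul hdisc
    _ = (Equiv.Perm.ofSubtype (τ.subtypePerm (fun x => (hpiff x).symm))).cycleType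
        + (Equiv.Perm.ofSubtype (τ.subtypePerm (fun x => (hpiff' x).symm))).cycleType := by
        rw [heq2, heq1, map_inv, Equiv.Perm.cycleType_inv]
    _ = τ.cycleType := by
        conv_rhs => rw [hdecτ]
        exact (Equiv.Perm.Disjoint.cycleType_mul hdisτ).symm

lemma exists_perm_partition (P : (Fintype.card (Fin n)).Partition) :
    ∃ σ : Equiv.Perm (Fin n), σ.partition = P := by
  classical
  set m := P.parts.filter (fun a => 2 ≤ a) with hm
  set r := P.parts.filter (fun a => ¬ 2 ≤ a) with hr
  have hsplit : m + r = P.parts := Multiset.filter_add_not _ _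
  have hsums : m.sum + r.sum = Fintype.card (Fin n) := by
    have hss := congrArg Multiset.sum hsplit
    rw [Multiset.sum_add] at hss
    rw [hss, P.parts_sum]
  have hm2 : ∀ a ∈ m, 2 ≤ a := fun a ha => (Multiset.mem_filter.mp ha).2
  have hmsum : m.sum ≤ Fintype.card (Fin n) := by omega
  obtain ⟨σ, hσ⟩ := (Equiv.Perm.exists_with_cycleType_iff (Fin n)).mpr ⟨hmsum, hm2⟩
  refine ⟨σ, Nat.Partition.ext ?_⟩
  rw [Equiv.Perm.parts_partition, hσ]
  have hsup : σ.support.card = m.sum := by rw [← Equiv.Perm.sum_cycleType, hσ]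
  rw [hsup]
  have hr1 : ∀ a ∈ r, a = 1 := by
    intro a ha
    have h1 := (Multiset.mem_filter.mp ha).2
    have h2 := P.parts_pos (Multiset.mem_filter.mp ha).1
    omega
  have hrrep : r = Multiset.replicate (Multiset.card r) 1 := Multiset.eq_replicate_card.mpr hr1
  have hrsum : r.sum = Multiset.card r := by
    rw [hrrep, Multiset.sum_replicate]
    simp
  have hcard : Multiset.card r = Fintype.card (Fin n) - m.sum := by omega
  rw [← hsplit, ← hcard, ← hrrep]

/-- The type of equivalence classes in the statement. -/
abbrev ClassType (n : ℕ) :=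
  {C : Set (Matrix (Fin n) (Fin n) ℕ) //
      ∃ A, (((∀ i, ∑ j, A i j = 2) ∧ (∀ j, ∑ i, A i j = 2)) ∧ permEquiv A Aᵀ) ∧
        C = {B | permEquiv A B}}

noncomputable def classPartition (C : ClassType n) : (Fintype.card (Fin n)).Partition :=
  (Classical.choose (exists_pm (Classical.choose_spec C.2).1.1.1
    (Classical.choose_spec C.2).1.1.2)).partition

lemma classPartition_spec (C : ClassType n) (A' : Matrix (Fin n) (Fin n) ℕ)
    (σ' : Equiv.Perm (Fin n)) (hC : C.1 = {B | permEquiv A' B})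
    (hσ' : permEquiv A' (pm σ')) : classPartition C = σ'.partition := by
  set A := Classical.choose C.2 with hA
  have hspec := Classical.choose_spec C.2
  set σ := Classical.choose (exists_pm hspec.1.1.1 hspec.1.1.2) with hσdef
  have hσ : permEquiv A (pm σ) := Classical.choose_spec (exists_pm hspec.1.1.1 hspec.1.1.2)
  have hAA' : permEquiv A A' := by
    have hmem : A' ∈ C.1 := by
      rw [hC]
      exact permEquiv_refl A'
    rw [hspec.2] at hmem
    exact hmem
  have hequiv : permEquiv (pm σ) (pm σ') :=
    permEquiv_trans (permEquiv_trans (permEquiv_symm hσ) hAA') hσ'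
  have hct := cycleType_eq_of_permEquiv hequiv
  exact Equiv.Perm.partition_eq_of_isConj.mp (Equiv.Perm.isConj_of_cycleType_eq hct)

lemma classPartition_bijective : Function.Bijective (classPartition (n := n)) := by
  constructor
  · intro C1 C2 hG
    have hspec1 := Classical.choose_spec C1.2
    have hspec2 := Classical.choose_spec C2.2
    set A1 := Classical.choose C1.2
    set A2 := Classical.choose C2.2
    have hσ1 : permEquiv A1 (pm (Classical.choose (exists_pm hspec1.1.1.1 hspec1.1.1.2))) :=
      Classical.choose_spec (exists_pm hspec1.1.1.1 hspec1.1.1.2)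
    have hσ2 : permEquiv A2 (pm (Classical.choose (exists_pm hspec2.1.1.1 hspec2.1.1.2))) :=
      Classical.choose_spec (exists_pm hspec2.1.1.1 hspec2.1.1.2)
    have hpm : permEquiv (pm (Classical.choose (exists_pm hspec1.1.1.1 hspec1.1.1.2)))
        (pm (Classical.choose (exists_pm hspec2.1.1.1 hspec2.1.1.2))) :=
      permEquiv_of_isConj (Equiv.Perm.partition_eq_of_isConj.mpr hG)
    have h12 : permEquiv A1 A2 :=
      permEquiv_trans (permEquiv_trans hσ1 hpm) (permEquiv_symm hσ2)
    apply Subtype.ext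
    rw [hspec1.2, hspec2.2]
    ext B
    constructor
    · exact fun hB => permEquiv_trans (permEquiv_symm h12) hB
    · exact fun hB => permEquiv_trans h12 hB
  · intro P
    obtain ⟨σ, hσ⟩ := exists_perm_partition P
    have htrans : permEquiv (pm σ) (pm σ)ᵀ := by
      rw [pm_transpose]
      exact permEquiv_of_isConj
        (Equiv.Perm.isConj_iff_cycleType_eq.mpr (Equiv.Perm.cycleType_inv σ).symm)
    refine ⟨⟨{B | permEquiv (pm σ) B},
      ⟨pm σ, ⟨⟨⟨pm_rowSum σ, pm_colSum σ⟩, htrans⟩, rfl⟩⟩⟩, ?_⟩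
    rw [classPartition_spec _ (pm σ) σ rfl (permEquiv_refl _), hσ]

end Stmt16Aux

/-- the number of permutation-equivalence classes of `n × n` non-negative
integer matrices with all row and column sums `2` that are permutation equivalent to their
transpose equals the number of partitions of `n`. -/
theorem stmt16 (n : ℕ) (hn : 0 < n) :
    Nat.card {C : Set (Matrix (Fin n) (Fin n) ℕ) //
        ∃ A, (((∀ i, ∑ j, A i j = 2) ∧ (∀ j, ∑ i, A i j = 2)) ∧ permEquiv A Aᵀ) ∧
          C = {B | permEquiv A B}} =
      Nat.card (Nat.Partition n) := by
  have hcard := Nat.card_eq_of_bijective _ (Stmt16Aux.classPartition_bijective (n := n))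
  rw [hcard]
  conv_rhs => rw [← Fintype.card_fin n]
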